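/- Let S be a nonempty set (the feasible set), K a nonempty finite index set, and for each k ∈ K let f_k, g_k : S → ℝ be functions with g_k(x) > 0 for every x ∈ S and k ∈ K. For x ∈ S write η(x) = min_{k∈K} f_k(x)/g_k(x). Suppose x* ∈ S, set η* = η(x*), and suppose x* maximizes x ↦ min_{k∈K}(f_k(x) − η*·g_k(x)) over S. Then x* maximizes η over S, i.e. η(x) ≤ η* for every x ∈ S. -/

import Mathlib

/-- Necessity direction of Theorem 4 (Dinkelbach optimality for max-min fractional
programming): if `x*` maximizes the parametric objective
`x ↦ min_k (f_k(x) − η*·g_k(x))` over `S` at the parameter `η* = η(x*)`, then `x*`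
maximizes the fractional objective `η(x) = min_k f_k(x)/g_k(x)` over `S`. -/
theorem dinkelbach_necessity
    {S K : Type*} [Nonempty S] [Fintype K] [Nonempty K]
    (f g : K → S → ℝ) (hg : ∀ k x, 0 < g k x)
    (η : S → ℝ)
    (hη : ∀ x, η x = Finset.univ.inf' Finset.univ_nonempty (fun k => f k x / g k x))
    (xstar : S)
    (hmax : ∀ x : S,
        Finset.univ.inf' Finset.univ_nonempty (fun k => f k x - η xstar * g k x) ≤
          Finset.univ.inf' Finset.univ_nonempty
            (fun k => f k xstar - η xstar * g k xstar)) :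
    ∀ x : S, η x ≤ η xstar := by
  intro x
  -- η* ≤ f k xstar / g k xstar for all k
  have hstar : ∀ k, η xstar ≤ f k xstar / g k xstar := by
    intro k
    rw [hη xstar]
    exact Finset.inf'_le _ (Finset.mem_univ k)
  -- we need min at xstar = 0 to conclude min at x ≤ 0. ≥ 0 isn't enough; show = 0.
  obtain ⟨k0, hk0mem, hk0⟩ := Finset.exists_mem_eq_inf' (Finset.univ_nonempty)
    (fun k => f k xstar / g k xstar)
  have hk0' : f k0 xstar - η xstar * g k0 xstar = 0 := by
    have : η xstar = f k0 xstar / g k0 xstar := by rw [hη xstar]; exact hk0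
    rw [this, div_mul_cancel₀ _ (hg k0 xstar).ne', sub_self]
  have hle0 : Finset.univ.inf' Finset.univ_nonempty
      (fun k => f k xstar - η xstar * g k xstar) ≤ 0 := by
    calc _ ≤ f k0 xstar - η xstar * g k0 xstar := Finset.inf'_le _ (Finset.mem_univ k0)
    _ = 0 := hk0'
  have hx : Finset.univ.inf' Finset.univ_nonempty
      (fun k => f k x - η xstar * g k x) ≤ 0 := le_trans (hmax x) hle0
  obtain ⟨k1, hk1mem, hk1⟩ := Finset.exists_mem_eq_inf' (Finset.univ_nonempty)
    (fun k => f k x - η xstar * g k x)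
  have hk1' : f k1 x - η xstar * g k1 x ≤ 0 := hk1 ▸ hx
  have : f k1 x / g k1 x ≤ η xstar := by
    rw [div_le_iff₀ (hg k1 x)]
    linarith
  calc η x ≤ f k1 x / g k1 x := by
        rw [hη x]; exact Finset.inf'_le _ (Finset.mem_univ k1)
    _ ≤ η xstar := this
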